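/- arXiv:1310.4802 — 4 statements merged into one kernel-verified Lean document; each statement's English description precedes it below -/
import Mathlib

section
/- Let t > 0 and k > 1 be real numbers and let p_0, p_1, p_2, p_3 be real numbers with 0 < p_i < 1 for each i. Suppose T : ℝ × ℕ → ℝ satisfies T(n, r) = 1 whenever n ≤ t·k^r and T(n, r) = 1 + ∑_{i=0}^{3} T(p_i·(n − t·k^r), r + 1) whenever n > t·k^r, and suppose T' : ℝ → ℝ satisfies T'(n) = 1 whenever n ≤ t and T'(n) = 1 + ∑_{i=0}^{3} T'(p_i·(n − t)/k) whenever n > t. Then for every real n and every natural number r, T(n, r) = T'(n / k^r). -/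
/-- If `T : ℝ × ℕ → ℝ` satisfies the two-parameter DN-tree size
recurrence with thresholds `t·k^r`, and `T' : ℝ → ℝ` satisfies the one-parameter
version with constant threshold `t` and argument divided by `k`, then
`T (n, r) = T' (n / k ^ r)` for all real `n` and natural `r`. -/
theorem dn_tree_two_param_eq_one_param
    (t k : ℝ) (ht : 0 < t) (hk : 1 < k)
    (p : Fin 4 → ℝ) (hp : ∀ i, 0 < p i ∧ p i < 1)
    (T : ℝ × ℕ → ℝ)
    (hT_base : ∀ (n : ℝ) (r : ℕ), n ≤ t * k ^ r → T (n, r) = 1)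
    (hT_rec : ∀ (n : ℝ) (r : ℕ), n > t * k ^ r →
      T (n, r) = 1 + ∑ i : Fin 4, T (p i * (n - t * k ^ r), r + 1))
    (T' : ℝ → ℝ)
    (hT'_base : ∀ n : ℝ, n ≤ t → T' n = 1)
    (hT'_rec : ∀ n : ℝ, n > t →
      T' n = 1 + ∑ i : Fin 4, T' (p i * (n - t) / k)) :
    ∀ (n : ℝ) (r : ℕ), T (n, r) = T' (n / k ^ r) := by
  have hk0 : (0:ℝ) < k := lt_trans one_pos hk
  have hkr : ∀ r : ℕ, (0:ℝ) < k ^ r := fun r => pow_pos hk0 r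
  have key : ∀ N : ℕ, ∀ (n : ℝ) (r : ℕ), n ≤ t * N * k ^ r →
      T (n, r) = T' (n / k ^ r) := by
    intro N
    induction N with
    | zero =>
      intro n r hn
      have hn0 : n ≤ 0 := by simpa using hn
      have h1 : n ≤ t * k ^ r := hn0.trans (le_of_lt (mul_pos ht (hkr r)))
      have h2 : n / k ^ r ≤ t := le_trans (div_nonpos_of_nonpos_of_nonneg hn0 (hkr r).le) ht.le
      rw [hT_base n r h1, hT'_base _ h2]
    | succ N ih =>
      intro n r hn
      rcases le_or_gt n (t * k ^ r) with h | h
      · have h2 : n / k ^ r ≤ t := by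
          rw [div_le_iff₀ (hkr r)]; exact h
        rw [hT_base n r h, hT'_base _ h2]
      · have h2 : n / k ^ r > t := by
          rw [gt_iff_lt, lt_div_iff₀ (hkr r)]; exact h
        rw [hT_rec n r h, hT'_rec _ h2]
        congr 1
        apply Finset.sum_congr rfl
        intro i _
        have hpi := hp i
        have hbound : p i * (n - t * k ^ r) ≤ t * N * k ^ (r + 1) := by
          have h1 : p i * (n - t * k ^ r) ≤ n - t * k ^ r := by
            have hpos : 0 ≤ n - t * k ^ r := le_of_lt (sub_pos.mpr h)
            nlinarith [hpi.2]
          have h2 : n - t * k ^ r ≤ t * N * k ^ r := by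
            have : n ≤ t * (N + 1) * k ^ r := by
              have := hn; push_cast at this ⊢; linarith
            nlinarith
          have h3 : t * N * k ^ r ≤ t * N * k ^ (r + 1) := by
            have : (k:ℝ) ^ r ≤ k ^ (r + 1) := by
              have := pow_le_pow_right₀ (le_of_lt hk) (Nat.le_succ r)
              exact this
            have hN : (0:ℝ) ≤ t * N := by positivity
            nlinarith
          linarith
        have := ih (p i * (n - t * k ^ r)) (r + 1) hbound
        rw [this]
        congr 1
        have hkrne : (k:ℝ) ^ r ≠ 0 := (hkr r).ne'
        field_simp
        ring
  intro n r
  obtain ⟨N, hN⟩ := exists_nat_ge (n / (t * k ^ r))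
  have : n ≤ t * N * k ^ r := by
    have hpos : (0:ℝ) < t * k ^ r := mul_pos ht (hkr r)
    rw [div_le_iff₀ hpos] at hN
    nlinarith
  exact key N n r this
end

section
/- Let t > 0 and k > 1 be real numbers, and let p_0, p_1, p_2, p_3 be real numbers with 0 < p_i < 1 for each i and p_0 + p_1 + p_2 + p_3 = 1. Suppose T' : ℝ → ℝ satisfies T'(n) = 1 whenever n ≤ t and T'(n) = 1 + ∑_{i=0}^{3} T'(p_i·(n − t)/k) whenever n > t. Then T'(N) = Θ(N^s) as N → ∞, where s is the real number satisfying p_0^s + p_1^s + p_2^s + p_3^s = k^s; that is, there exist constants 0 < c_1 ≤ c_2 and N_0 such that c_1·N^s ≤ T'(N) ≤ c_2·N^s for all N ≥ N_0. -/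
/-- Subadditivity of `x ↦ x ^ s` on nonnegative reals for `0 ≤ s ≤ 1`. -/
lemma real_rpow_add_le_add_rpow {s : ℝ} (hs : 0 ≤ s) (hs1 : s ≤ 1)
    {a b : ℝ} (ha : 0 ≤ a) (hb : 0 ≤ b) : (a + b) ^ s ≤ a ^ s + b ^ s := by
  have key : ((a.toNNReal + b.toNNReal) ^ s : NNReal) ≤ a.toNNReal ^ s + b.toNNReal ^ s :=
    NNReal.rpow_add_le_add_rpow _ _ hs hs1
  calc (a + b) ^ s = ((a.toNNReal + b.toNNReal : NNReal) : ℝ) ^ s := by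
        rw [NNReal.coe_add, Real.coe_toNNReal _ ha, Real.coe_toNNReal _ hb]
    _ = (((a.toNNReal + b.toNNReal) ^ s : NNReal) : ℝ) := (NNReal.coe_rpow _ _).symm
    _ ≤ ((a.toNNReal ^ s + b.toNNReal ^ s : NNReal) : ℝ) := by exact_mod_cast key
    _ = a ^ s + b ^ s := by
        rw [NNReal.coe_add, NNReal.coe_rpow, NNReal.coe_rpow,
          Real.coe_toNNReal _ ha, Real.coe_toNNReal _ hb]

set_option maxHeartbeats 1600000 in
/-- The one-parameter DN-tree size recurrence `T'` satisfies
`T'(N) = Θ(N^s)` as `N → ∞`, where `s` is the real number satisfying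
`p₀^s + p₁^s + p₂^s + p₃^s = k^s`. -/
theorem dn_tree_size_asymptotics
    (t k : ℝ) (ht : 0 < t) (hk : 1 < k)
    (p : Fin 4 → ℝ) (hp : ∀ i, 0 < p i ∧ p i < 1)
    (hpsum : ∑ i : Fin 4, p i = 1)
    (T' : ℝ → ℝ)
    (hT'_base : ∀ n : ℝ, n ≤ t → T' n = 1)
    (hT'_rec : ∀ n : ℝ, n > t →
      T' n = 1 + ∑ i : Fin 4, T' (p i * (n - t) / k))
    (s : ℝ) (hs : ∑ i : Fin 4, p i ^ s = k ^ s) :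
    ∃ c₁ c₂ N₀ : ℝ, 0 < c₁ ∧ c₁ ≤ c₂ ∧
      ∀ N : ℝ, N ≥ N₀ → c₁ * N ^ s ≤ T' N ∧ T' N ≤ c₂ * N ^ s := by
  have hk0 : (0:ℝ) < k := lt_trans one_pos hk
  -- `s` is strictly between 0 and 1.
  have hs_pos : 0 < s := by
    by_contra h
    push_neg at h
    have h1 : ∀ i, (1:ℝ) ≤ p i ^ s := fun i =>
      Real.one_le_rpow_of_pos_of_le_one_of_nonpos (hp i).1 (hp i).2.le h
    have h2 : k ^ s ≤ 1 := Real.rpow_le_one_of_one_le_of_nonpos hk.le h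
    have h3 : (4:ℝ) ≤ k ^ s := by
      rw [← hs, Fin.sum_univ_four]
      linarith [h1 0, h1 1, h1 2, h1 3]
    linarith
  have hs_le1 : s ≤ 1 := by
    by_contra h
    push_neg at h
    have h1 : ∀ i, p i ^ s ≤ p i := by
      intro i
      calc p i ^ s ≤ p i ^ (1:ℝ) :=
            Real.rpow_le_rpow_of_exponent_ge (hp i).1 (hp i).2.le h.le
        _ = p i := Real.rpow_one _
    have h2 : k < k ^ s := by
      calc k = k ^ (1:ℝ) := (Real.rpow_one _).symm
        _ < k ^ s := Real.rpow_lt_rpow_of_exponent_lt hk h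
    have h3 : k ^ s ≤ 1 := by
      rw [← hs, Fin.sum_univ_four]
      rw [Fin.sum_univ_four] at hpsum
      linarith [h1 0, h1 1, h1 2, h1 3]
    linarith
  have hts : 0 < t ^ s := Real.rpow_pos_of_pos ht s
  have hks : 0 < k ^ s := Real.rpow_pos_of_pos hk0 s
  -- The key identity: for `x ≥ 0`, `∑ (pᵢ x / k)^s = x^s`.
  have key : ∀ x : ℝ, 0 ≤ x → ∑ i : Fin 4, (p i * x / k) ^ s = x ^ s := by
    intro x hx
    have hterm : ∀ i : Fin 4, (p i * x / k) ^ s = p i ^ s * (x ^ s / k ^ s) := by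
      intro i
      rw [mul_div_assoc, Real.mul_rpow (hp i).1.le (by positivity),
        Real.div_rpow hx hk0.le]
    calc ∑ i : Fin 4, (p i * x / k) ^ s = ∑ i : Fin 4, p i ^ s * (x ^ s / k ^ s) :=
          Finset.sum_congr rfl fun i _ => hterm i
      _ = (∑ i : Fin 4, p i ^ s) * (x ^ s / k ^ s) := by rw [Finset.sum_mul]
      _ = x ^ s := by rw [hs]; field_simp
  -- Children bounds (upper): if `t < n ≤ t·k^(m+1)` then each child argument is `≤ t·k^m`.
  have hchild_le : ∀ (m : ℕ) (n : ℝ), t < n → n ≤ t * k ^ (m + 1) →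
      ∀ i : Fin 4, p i * (n - t) / k ≤ t * k ^ m := by
    intro m n hn1 hn2 i
    have hnt0 : 0 ≤ n - t := by linarith
    have h1 : p i * (n - t) ≤ n - t := by nlinarith [(hp i).1, (hp i).2]
    have h4 : p i * (n - t) ≤ t * k ^ (m + 1) := by linarith
    have h5 : p i * (n - t) / k ≤ t * k ^ (m + 1) / k := by gcongr
    have h6 : t * k ^ (m + 1) / k = t * k ^ m := by
      field_simp [pow_succ]
      ring
    linarith [h5, h6.le, h6.ge]
  -- Lower bound claim: `T' n ≥ n^s / t^s` for `0 ≤ n`.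
  have claimL : ∀ (m : ℕ) (n : ℝ), 0 ≤ n → n ≤ t * k ^ m → n ^ s / t ^ s ≤ T' n := by
    intro m
    induction m with
    | zero =>
      intro n hn0 hnt
      rw [pow_zero, mul_one] at hnt
      rw [hT'_base n hnt, div_le_one hts]
      exact Real.rpow_le_rpow hn0 hnt hs_pos.le
    | succ m ih =>
      intro n hn0 hnt
      by_cases hcase : n ≤ t
      · rw [hT'_base n hcase, div_le_one hts]
        exact Real.rpow_le_rpow hn0 hcase hs_pos.le
      · push_neg at hcase
        rw [hT'_rec n hcase]
        have hnt0 : 0 ≤ n - t := by linarith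
        have hchild : ∀ i : Fin 4,
            (p i * (n - t) / k) ^ s / t ^ s ≤ T' (p i * (n - t) / k) := by
          intro i
          apply ih
          · exact div_nonneg (mul_nonneg (hp i).1.le hnt0) hk0.le
          · exact hchild_le m n hcase hnt i
        have hsum : (n - t) ^ s / t ^ s ≤ ∑ i : Fin 4, T' (p i * (n - t) / k) := by
          rw [← key (n - t) hnt0, Finset.sum_div]
          exact Finset.sum_le_sum fun i _ => hchild i
        have hsub : n ^ s ≤ (n - t) ^ s + t ^ s := by
          have h := real_rpow_add_le_add_rpow hs_pos.le hs_le1 hnt0 ht.le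
          rwa [sub_add_cancel] at h
        have h7 : n ^ s / t ^ s ≤ ((n - t) ^ s + t ^ s) / t ^ s := by gcongr
        have h8 : ((n - t) ^ s + t ^ s) / t ^ s = (n - t) ^ s / t ^ s + 1 := by
          field_simp
        linarith
  -- Crude global bound: `T' n ≤ 4^(m+1) - 1` for `n ≤ t·k^m`.
  have claimA : ∀ (m : ℕ) (n : ℝ), n ≤ t * k ^ m → T' n ≤ 4 ^ (m + 1) - 1 := by
    intro m
    induction m with
    | zero =>
      intro n hnt
      rw [pow_zero, mul_one] at hnt
      rw [hT'_base n hnt]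
      norm_num
    | succ m ih =>
      intro n hnt
      by_cases hcase : n ≤ t
      · rw [hT'_base n hcase]
        have h4 : (4:ℝ) ^ 1 ≤ (4:ℝ) ^ (m + 1 + 1) :=
          pow_le_pow_right₀ (by norm_num) (by omega)
        simp only [pow_one] at h4
        linarith
      · push_neg at hcase
        rw [hT'_rec n hcase]
        have hc : ∀ i : Fin 4, T' (p i * (n - t) / k) ≤ 4 ^ (m + 1) - 1 :=
          fun i => ih _ (hchild_le m n hcase hnt i)
        have hsum : ∑ i : Fin 4, T' (p i * (n - t) / k) ≤ 4 * (4 ^ (m + 1) - 1) := by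
          rw [Fin.sum_univ_four]
          linarith [hc 0, hc 1, hc 2, hc 3]
        have hpow : (4:ℝ) ^ (m + 1 + 1) = 4 * 4 ^ (m + 1) := by ring
        linarith
  -- Setting up constants for the upper bound.
  have hp0 := (hp 0).1
  have hp1 := (hp 1).1
  have hp2 := (hp 2).1
  have hp3 := (hp 3).1
  set n₂ : ℝ := t + k * t * (∑ j : Fin 4, 1 / p j) with hn₂_def
  have hsum_pos : 0 < ∑ j : Fin 4, 1 / p j :=
    Finset.sum_pos (fun j _ => by have := (hp j).1; positivity) Finset.univ_nonempty
  have hn₂ : t < n₂ := by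
    have hpos : 0 < k * t * (∑ j : Fin 4, 1 / p j) := by positivity
    rw [hn₂_def]
    linarith
  have hn₂0 : 0 < n₂ := lt_trans ht hn₂
  obtain ⟨m₂, hm₂⟩ : ∃ m : ℕ, n₂ / t < k ^ m := pow_unbounded_of_one_lt _ hk
  have hm₂' : n₂ ≤ t * k ^ m₂ := by
    rw [div_lt_iff₀ ht] at hm₂
    nlinarith
  set M : ℝ := 4 ^ (m₂ + 1) - 1 with hM_def
  have hM : ∀ n : ℝ, n ≤ n₂ → T' n ≤ M := fun n hn => claimA m₂ n (le_trans hn hm₂')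
  have hM3 : (3:ℝ) ≤ M := by
    have h4 : (4:ℝ) ^ 1 ≤ (4:ℝ) ^ (m₂ + 1) := pow_le_pow_right₀ (by norm_num) (by omega)
    simp only [pow_one] at h4
    simp only [hM_def]
    linarith
  set A : ℝ := (M + 1) / t ^ s with hA_def
  have hA_pos : 0 < A := div_pos (by linarith) hts
  have hAts : A * t ^ s = M + 1 := by
    rw [hA_def]
    field_simp
  -- Children stay `≥ t` once `n ≥ n₂`.
  have hchild_ge : ∀ n : ℝ, n₂ ≤ n → ∀ i : Fin 4, t ≤ p i * (n - t) / k := by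
    intro n hn i
    have hiq : (1:ℝ) / p i ≤ ∑ j : Fin 4, 1 / p j :=
      Finset.single_le_sum (f := fun j : Fin 4 => 1 / p j)
        (fun j _ => by have := (hp j).1; positivity) (Finset.mem_univ i)
    have h1 : k * t * (1 / p i) ≤ k * t * (∑ j : Fin 4, 1 / p j) :=
      mul_le_mul_of_nonneg_left hiq (by positivity)
    have h2 : k * t / p i ≤ n - t := by
      have he : k * t * (1 / p i) = k * t / p i := by ring
      rw [he] at h1
      rw [hn₂_def] at hn
      linarith
    rw [le_div_iff₀ hk0]
    have h3 : k * t ≤ (n - t) * p i := (div_le_iff₀ (hp i).1).1 h2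
    nlinarith [(hp i).1]
  -- Upper bound claim.
  have claimU : ∀ (m : ℕ) (n : ℝ), t ≤ n → n ≤ n₂ * k ^ m → T' n ≤ A * n ^ s - 1 / 3 := by
    have base : ∀ n : ℝ, t ≤ n → n ≤ n₂ → T' n ≤ A * n ^ s - 1 / 3 := by
      intro n hn1 hn2
      have h1 : T' n ≤ M := hM n hn2
      have h2 : A * t ^ s ≤ A * n ^ s :=
        mul_le_mul_of_nonneg_left (Real.rpow_le_rpow ht.le hn1 hs_pos.le) hA_pos.le
      rw [hAts] at h2
      linarith
    intro m
    induction m with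
    | zero =>
      intro n hn1 hn2
      rw [pow_zero, mul_one] at hn2
      exact base n hn1 hn2
    | succ m ih =>
      intro n hn1 hn2
      by_cases hcase : n ≤ n₂
      · exact base n hn1 hcase
      · push_neg at hcase
        have hnt : t < n := lt_trans hn₂ hcase
        have hnt0 : 0 ≤ n - t := by linarith
        rw [hT'_rec n hnt]
        have hclow : ∀ i : Fin 4, t ≤ p i * (n - t) / k := hchild_ge n hcase.le
        have hchigh : ∀ i : Fin 4, p i * (n - t) / k ≤ n₂ * k ^ m := by
          intro i
          have h1 : p i * (n - t) ≤ n - t := by nlinarith [(hp i).1, (hp i).2]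
          have h4 : p i * (n - t) ≤ n₂ * k ^ (m + 1) := by linarith
          have h5 : p i * (n - t) / k ≤ n₂ * k ^ (m + 1) / k := by gcongr
          have h6 : n₂ * k ^ (m + 1) / k = n₂ * k ^ m := by
            field_simp [pow_succ]
            ring
          linarith [h6.le, h6.ge]
        have hc : ∀ i : Fin 4, T' (p i * (n - t) / k) ≤ A * (p i * (n - t) / k) ^ s - 1 / 3 :=
          fun i => ih _ (hclow i) (hchigh i)
        have hsum : ∑ i : Fin 4, T' (p i * (n - t) / k) ≤
            A * (n - t) ^ s - 4 / 3 := by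
          calc ∑ i : Fin 4, T' (p i * (n - t) / k)
              ≤ ∑ i : Fin 4, (A * (p i * (n - t) / k) ^ s - 1 / 3) :=
                Finset.sum_le_sum fun i _ => hc i
            _ = A * (∑ i : Fin 4, (p i * (n - t) / k) ^ s) - 4 / 3 := by
                rw [Finset.sum_sub_distrib, ← Finset.mul_sum]
                norm_num
            _ = A * (n - t) ^ s - 4 / 3 := by rw [key (n - t) hnt0]
        have hmono : (n - t) ^ s ≤ n ^ s :=
          Real.rpow_le_rpow hnt0 (by linarith) hs_pos.le
        have h8 : A * (n - t) ^ s ≤ A * n ^ s := mul_le_mul_of_nonneg_left hmono hA_pos.le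
        linarith
  -- Conclusion.
  refine ⟨1 / t ^ s, A, n₂, by positivity, ?_, ?_⟩
  · rw [hA_def, div_le_div_iff₀ hts hts]
    nlinarith [mul_pos (show (0:ℝ) < M by linarith) hts]
  · intro N hN
    have hNt : t ≤ N := le_trans hn₂.le hN
    have hN0 : 0 ≤ N := le_trans ht.le hNt
    constructor
    · obtain ⟨m, hm⟩ : ∃ m : ℕ, N / t < k ^ m := pow_unbounded_of_one_lt _ hk
      have hm' : N ≤ t * k ^ m := by
        rw [div_lt_iff₀ ht] at hm
        nlinarith
      have h := claimL m N hN0 hm'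
      calc 1 / t ^ s * N ^ s = N ^ s / t ^ s := by ring
        _ ≤ T' N := h
    · obtain ⟨m, hm⟩ : ∃ m : ℕ, N / n₂ < k ^ m := pow_unbounded_of_one_lt _ hk
      have hm' : N ≤ n₂ * k ^ m := by
        rw [div_lt_iff₀ hn₂0] at hm
        nlinarith
      have h := claimU m N hNt hm'
      nlinarith [Real.rpow_nonneg hN0 s]
end

section
/- Let p_0, p_1, p_2, p_3 be real numbers with 0 < p_i < 1 for each i and p_0 + p_1 + p_2 + p_3 = 1, and let k ≥ 1 be a real number. If the real number s satisfies p_0^s + p_1^s + p_2^s + p_3^s = k^s and s > 0, then s ≤ log 4 / log(4k). -/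
/-- if `s > 0` satisfies `p₀^s + p₁^s + p₂^s + p₃^s = k^s`, then
`s ≤ log 4 / log (4k)`. -/
theorem dn_tree_exponent_le_log_bound
    (p : Fin 4 → ℝ) (hp : ∀ i, 0 < p i ∧ p i < 1)
    (hpsum : ∑ i : Fin 4, p i = 1)
    (k : ℝ) (hk : 1 ≤ k)
    (s : ℝ) (hs : ∑ i : Fin 4, p i ^ s = k ^ s) (hspos : 0 < s) :
    s ≤ Real.log 4 / Real.log (4 * k) := by
  have hk0 : (0:ℝ) < k := lt_of_lt_of_le one_pos hk
  -- First: s ≤ 1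
  have hs1 : s ≤ 1 := by
    by_contra h
    push_neg at h
    have h1 : ∑ i : Fin 4, p i ^ s < 1 := by
      calc ∑ i : Fin 4, p i ^ s < ∑ i : Fin 4, p i := by
            refine Finset.sum_lt_sum_of_nonempty (by simp) fun i _ => ?_
            have := (hp i).1
            calc p i ^ s < p i ^ (1:ℝ) :=
              Real.rpow_lt_rpow_of_exponent_gt (hp i).1 (hp i).2 h
            _ = p i := Real.rpow_one _
        _ = 1 := hpsum
    have h2 : (1:ℝ) ≤ k ^ s := Real.one_le_rpow hk hspos.le
    linarith [hs ▸ h1]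
  -- Jensen: ∑ p i ^ s ≤ 4 * (1/4)^s
  have hjen : k ^ s ≤ 4 * (1/4 : ℝ) ^ s := by
    have hc := Real.concaveOn_rpow hspos.le hs1
    have := hc.le_map_sum (t := Finset.univ) (w := fun _ : Fin 4 => (1/4 : ℝ))
      (p := p) (fun i _ => by norm_num) (by norm_num)
      (fun i _ => Set.mem_Ici.2 (hp i).1.le)
    simp only [smul_eq_mul, ← Finset.mul_sum, hpsum, mul_one] at this
    rw [← hs]
    linarith
  -- hence (4k)^s ≤ 4
  have hkey : (4 * k) ^ s ≤ 4 := by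
    have h4 : ((4:ℝ)) ^ s * (1/4 : ℝ) ^ s = 1 := by
      rw [← Real.mul_rpow (by norm_num) (by norm_num)]
      norm_num
    have : (4 * k) ^ s = 4 ^ s * k ^ s := Real.mul_rpow (by norm_num) hk0.le
    calc (4 * k) ^ s = 4 ^ s * k ^ s := this
      _ ≤ 4 ^ s * (4 * (1/4:ℝ) ^ s) := by
          exact mul_le_mul_of_nonneg_left hjen (Real.rpow_nonneg (by norm_num) s)
      _ = 4 := by rw [show (4:ℝ) ^ s * (4 * (1/4:ℝ) ^ s) = (4 ^ s * (1/4:ℝ)^s) * 4 by ring, h4]; ring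
  -- conclude with logarithms
  have hlogpos : 0 < Real.log (4 * k) := Real.log_pos (by linarith)
  rw [le_div_iff₀ hlogpos]
  have := Real.log_le_log (by positivity) hkey
  rwa [Real.log_rpow (by linarith)] at this
end

section
/- Let p_0, p_1, p_2, p_3 be real numbers with 0 < p_i < 1 for each i and p_0 + p_1 + p_2 + p_3 = 1, and let k ≥ 1 be a real number. If the real number s satisfies p_0^s + p_1^s + p_2^s + p_3^s = k^s and s > 0, then s ≤ 1. -/
/-- if `s > 0` satisfies `p₀^s + p₁^s + p₂^s + p₃^s = k^s` with
`k ≥ 1`, then `s ≤ 1`. -/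
theorem dn_tree_exponent_le_one
    (p : Fin 4 → ℝ) (hp : ∀ i, 0 < p i ∧ p i < 1)
    (hpsum : ∑ i : Fin 4, p i = 1)
    (k : ℝ) (hk : 1 ≤ k)
    (s : ℝ) (hs : ∑ i : Fin 4, p i ^ s = k ^ s) (hspos : 0 < s) :
    s ≤ 1 := by
  by_contra h
  push_neg at h
  have hlt : ∑ i : Fin 4, p i ^ s < ∑ i : Fin 4, p i := by
    apply Finset.sum_lt_sum_of_nonempty (by simp)
    intro i _
    have := hp i
    calc p i ^ s < p i ^ (1 : ℝ) :=
          Real.rpow_lt_rpow_of_exponent_gt this.1 this.2 h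
      _ = p i := Real.rpow_one _
  have hk1 : (1 : ℝ) ≤ k ^ s := Real.one_le_rpow hk (le_of_lt hspos)
  rw [hs, hpsum] at hlt
  linarith
end
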